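/- arXiv:1910.07592 — 5 statements merged into one kernel-verified Lean document; each statement's English description precedes it below -/
import Mathlib

section
/- Let G be a group with G = KH where K is a central subgroup and H a subgroup. If (G₁, G₂) is a dual pair in G (i.e. C_G(G₁) = G₂ and C_G(G₂) = G₁), then (G₁ ∩ H, G₂ ∩ H) is a dual pair in H, i.e. C_H(G₁ ∩ H) = G₂ ∩ H and C_H(G₂ ∩ H) = G₁ ∩ H. -/
lemma aux7 {G : Type*} [Group G] (K H : Subgroup G)
    (hK : K ≤ Subgroup.center G)
    (hKH : ∀ g : G, ∃ k ∈ K, ∃ h ∈ H, g = k * h)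
    (G₁ G₂ : Subgroup G)
    (h₁ : Subgroup.centralizer (G₁ : Set G) = G₂)
    (h₂ : Subgroup.centralizer (G₂ : Set G) = G₁) :
    Subgroup.centralizer ((G₁ ⊓ H : Subgroup G) : Set G) ⊓ H = G₂ ⊓ H := by
  apply le_antisymm
  · intro x hx'
    obtain ⟨hx, hxH⟩ := Subgroup.mem_inf.mp hx'
    rw [Subgroup.mem_centralizer_iff] at hx
    rw [Subgroup.mem_inf]
    refine ⟨?_, hxH⟩
    rw [← h₁, Subgroup.mem_centralizer_iff]
    intro g hg
    obtain ⟨k, hk, h, hh, rfl⟩ := hKH g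
    have hkG₁ : k ∈ G₁ := by
      rw [← h₂]
      rw [Subgroup.mem_centralizer_iff]
      intro y _
      exact Subgroup.mem_center_iff.mp (hK hk) y
    have hhG₁ : h ∈ G₁ := by
      have := G₁.mul_mem (G₁.inv_mem hkG₁) hg
      simpa using this
    have hcomm : h * x = x * h := hx h ⟨hhG₁, hh⟩
    have hkx : k * x = x * k := (Subgroup.mem_center_iff.mp (hK hk) x).symm
    calc k * h * x = k * (x * h) := by rw [mul_assoc, hcomm]
    _ = x * (k * h) := by rw [← mul_assoc, hkx, mul_assoc]
  · intro x hx'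
    obtain ⟨hxG₂, hxH⟩ := Subgroup.mem_inf.mp hx'
    rw [Subgroup.mem_inf]
    refine ⟨?_, hxH⟩
    rw [Subgroup.mem_centralizer_iff]
    intro g hg
    rw [← h₁, Subgroup.mem_centralizer_iff] at hxG₂
    exact hxG₂ g hg.1

theorem stmt7 {G : Type*} [Group G] (K H : Subgroup G)
    (hK : K ≤ Subgroup.center G)
    (hKH : ∀ g : G, ∃ k ∈ K, ∃ h ∈ H, g = k * h)
    (G₁ G₂ : Subgroup G)
    (h₁ : Subgroup.centralizer (G₁ : Set G) = G₂)
    (h₂ : Subgroup.centralizer (G₂ : Set G) = G₁) :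
    Subgroup.centralizer ((G₁ ⊓ H : Subgroup G) : Set G) ⊓ H = G₂ ⊓ H ∧
    Subgroup.centralizer ((G₂ ⊓ H : Subgroup G) : Set G) ⊓ H = G₁ ⊓ H := by
  exact ⟨aux7 K H hK hKH G₁ G₂ h₁ h₂, aux7 K H hK hKH G₂ G₁ h₂ h₁⟩
end

section
/- Let G be a group with G = KH where K is a central subgroup and H a subgroup. If (H₁, H₂) is a dual pair in H (i.e. C_H(H₁) = H₂ and C_H(H₂) = H₁), then (KH₁, KH₂) is a dual pair in G: C_G(KH₁) = KH₂ and C_G(KH₂) = KH₁. -/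
open Pointwise

lemma aux8 {G : Type*} [Group G] (K H : Subgroup G)
    (hK : K ≤ Subgroup.center G)
    (hKH : ∀ g : G, ∃ k ∈ K, ∃ h ∈ H, g = k * h)
    (H₁ H₂ : Subgroup G) (hH₁ : H₁ ≤ H)
    (hc : Subgroup.centralizer (H₁ : Set G) ⊓ H = H₂) :
    (Subgroup.centralizer ((K : Set G) * (H₁ : Set G)) : Set G)
        = (K : Set G) * (H₂ : Set G) := by
  ext g
  constructor
  · intro hg
    obtain ⟨k, hk, h, hh, rfl⟩ := hKH g
    refine ⟨k, hk, h, ?_, rfl⟩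
    have hmem : h ∈ Subgroup.centralizer (H₁ : Set G) ⊓ H := by
      refine ⟨Subgroup.mem_centralizer_iff.2 fun x hx => ?_, hh⟩
      have hxKH : x ∈ (K : Set G) * (H₁ : Set G) :=
        ⟨1, one_mem _, x, hx, one_mul x⟩
      have heq := (Subgroup.mem_centralizer_iff.1 hg) x hxKH
      have hkc := (Subgroup.mem_center_iff.1 (hK hk))
      rw [← mul_assoc, hkc x, mul_assoc, mul_assoc] at heq
      exact mul_left_cancel heq
    rw [hc] at hmem; exact hmem
  · rintro ⟨k, hk, h, hh, rfl⟩
    refine Subgroup.mem_centralizer_iff.2 fun x hx => ?_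
    obtain ⟨k', hk', h₁, hh₁, rfl⟩ := hx
    have ck : ∀ g : G, Commute k g := fun g => (Subgroup.mem_center_iff.1 (hK hk) g).symm
    have ck' : ∀ g : G, Commute k' g := fun g => (Subgroup.mem_center_iff.1 (hK hk') g).symm
    have hcomm : Commute h₁ h := by
      rw [← hc] at hh
      exact Subgroup.mem_centralizer_iff.1 hh.1 h₁ hh₁
    exact Commute.mul_left (ck' (k * h)) (Commute.mul_right (ck h₁).symm hcomm)

theorem stmt8 {G : Type*} [Group G] (K H : Subgroup G)
    (hK : K ≤ Subgroup.center G)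
    (hKH : ∀ g : G, ∃ k ∈ K, ∃ h ∈ H, g = k * h)
    (H₁ H₂ : Subgroup G) (hH₁ : H₁ ≤ H) (hH₂ : H₂ ≤ H)
    (hc₁ : Subgroup.centralizer (H₁ : Set G) ⊓ H = H₂)
    (hc₂ : Subgroup.centralizer (H₂ : Set G) ⊓ H = H₁) :
    (Subgroup.centralizer ((K : Set G) * (H₁ : Set G)) : Set G)
        = (K : Set G) * (H₂ : Set G) ∧
    (Subgroup.centralizer ((K : Set G) * (H₂ : Set G)) : Set G)
        = (K : Set G) * (H₁ : Set G) := by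
  exact ⟨aux8 K H hK hKH H₁ H₂ hH₁ hc₁, aux8 K H hK hKH H₂ H₁ hH₂ hc₂⟩
end

section
/- Let G be a group with G = KH where K is central and H a subgroup, and let (H₁, H₂) be a dual pair in H. Then (K·H₁) ∩ H = H₁ and (K·H₂) ∩ H = H₂. -/
open Pointwise

lemma aux9 {G : Type*} [Group G] (K H : Subgroup G)
    (hK : K ≤ Subgroup.center G)
    (H₁ H₂ : Subgroup G) (hH₁ : H₁ ≤ H)
    (hc : Subgroup.centralizer (H₂ : Set G) ⊓ H = H₁) :
    ((K : Set G) * (H₁ : Set G)) ∩ (H : Set G) = (H₁ : Set G) := by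
  ext x
  constructor
  · rintro ⟨⟨k, hk, h, hh, rfl⟩, hxH⟩
    have hkc : k ∈ Subgroup.centralizer (H₂ : Set G) :=
      Subgroup.center_le_centralizer _ (hK hk)
    have hhc : h ∈ Subgroup.centralizer (H₂ : Set G) := by
      rw [← hc] at hh; exact hh.1
    have : k * h ∈ Subgroup.centralizer (H₂ : Set G) ⊓ H :=
      ⟨mul_mem hkc hhc, hxH⟩
    rw [hc] at this
    exact this
  · intro hx
    exact ⟨⟨1, one_mem K, x, hx, one_mul x⟩, hH₁ hx⟩

theorem stmt9 {G : Type*} [Group G] (K H : Subgroup G)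
    (hK : K ≤ Subgroup.center G)
    (hKH : ∀ g : G, ∃ k ∈ K, ∃ h ∈ H, g = k * h)
    (H₁ H₂ : Subgroup G) (hH₁ : H₁ ≤ H) (hH₂ : H₂ ≤ H)
    (hc₁ : Subgroup.centralizer (H₁ : Set G) ⊓ H = H₂)
    (hc₂ : Subgroup.centralizer (H₂ : Set G) ⊓ H = H₁) :
    ((K : Set G) * (H₁ : Set G)) ∩ (H : Set G) = (H₁ : Set G) ∧
    ((K : Set G) * (H₂ : Set G)) ∩ (H : Set G) = (H₂ : Set G) := by
  exact ⟨aux9 K H hK H₁ H₂ hH₁ hc₂, aux9 K H hK H₂ H₁ hH₂ hc₁⟩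
end

section
/- Let G be a topological group, N a normal subgroup, π : G → G/N the quotient map, and H a connected subgroup of G. Suppose the set K = { t h t⁻¹ h⁻¹ : t ∈ π⁻¹(C_{G/N}(π(H))), h ∈ H } is discrete. Then C_{G/N}(π(H)) = π(C_G(H)). -/
theorem stmt12 {G : Type*} [Group G] [TopologicalSpace G] [IsTopologicalGroup G]
    (N : Subgroup G) [N.Normal] (H : Subgroup G) (hH : IsConnected (H : Set G))
    (hK : DiscreteTopology
      {g : G | ∃ t h : G,
        QuotientGroup.mk' N t ∈
          Subgroup.centralizer ((H.map (QuotientGroup.mk' N)) : Set (G ⧸ N)) ∧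
        h ∈ H ∧ g = t * h * t⁻¹ * h⁻¹}) :
    Subgroup.centralizer ((H.map (QuotientGroup.mk' N)) : Set (G ⧸ N))
      = (Subgroup.centralizer (H : Set G)).map (QuotientGroup.mk' N) := by
  ext q
  constructor
  · intro hq
    obtain ⟨t, rfl⟩ := QuotientGroup.mk'_surjective N q
    refine ⟨t, ?_, rfl⟩
    intro h hh
    have key : t * h * t⁻¹ * h⁻¹ = t * 1 * t⁻¹ * 1⁻¹ := by
      refine hH.isPreconnected.constant_of_mapsTo (T :=
        {g : G | ∃ t' h' : G,
          QuotientGroup.mk' N t' ∈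
            Subgroup.centralizer ((H.map (QuotientGroup.mk' N)) : Set (G ⧸ N)) ∧
          h' ∈ H ∧ g = t' * h' * t'⁻¹ * h'⁻¹})
        (f := fun g => t * g * t⁻¹ * g⁻¹) (isDiscrete_iff_discreteTopology.mpr hK) ?_ ?_ hh H.one_mem
      · fun_prop
      · intro g hg
        exact ⟨t, g, hq, hg, rfl⟩
    simp only [mul_one, inv_one, mul_inv_cancel_right] at key
    have : t * h * t⁻¹ * h⁻¹ = 1 := by rw [key]; group
    calc h * t = (t * h * t⁻¹ * h⁻¹) * h * t := by rw [this]; group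
      _ = t * h := by group
  · rintro ⟨t, ht, rfl⟩
    intro x hx
    obtain ⟨h, hh, rfl⟩ := hx
    have := ht h hh
    simp only [QuotientGroup.mk'_apply] at *
    rw [← QuotientGroup.mk_mul, ← QuotientGroup.mk_mul, this]
end

section
/- Let G be a group, K a central subgroup, H = G/K, and suppose the short exact sequence 1 → K → G → H → 1 splits via a section α : H → G. Then G = K · α(H), and the dual pairs in α(H) ≅ H are in bijection with the dual pairs in G, given in one direction by (H₁, H₂) ↦ (K·H₁, K·H₂) and in the other by intersection with α(H). -/
theorem stmt16 {G : Type*} [Group G] (K : Subgroup G)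
    (hK : K ≤ Subgroup.center G) [K.Normal]
    (α : G ⧸ K →* G) (hα : ∀ x : G ⧸ K, QuotientGroup.mk' K (α x) = x) :
    (∀ g : G, ∃ k ∈ K, ∃ h ∈ α.range, g = k * h) ∧
    ∃ e : {p : Subgroup G × Subgroup G //
            p.1 ≤ α.range ∧ p.2 ≤ α.range ∧
            Subgroup.centralizer (p.1 : Set G) ⊓ α.range = p.2 ∧
            Subgroup.centralizer (p.2 : Set G) ⊓ α.range = p.1} ≃
          {p : Subgroup G × Subgroup G //
            Subgroup.centralizer (p.1 : Set G) = p.2 ∧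
            Subgroup.centralizer (p.2 : Set G) = p.1},
      (∀ p, (e p).1 = (K ⊔ p.1.1, K ⊔ p.1.2)) ∧
      (∀ q, (e.symm q).1 = (q.1.1 ⊓ α.range, q.1.2 ⊓ α.range)) := by
  -- basic facts
  have hbot : K ⊓ α.range = ⊥ := by
    rw [eq_bot_iff]
    rintro x ⟨hx, y, rfl⟩
    have : QuotientGroup.mk' K (α y) = 1 := (QuotientGroup.eq_one_iff _).mpr hx
    rw [hα] at this
    simp [this]
  have memsup : ∀ (A : Subgroup G) (g : G), g ∈ K ⊔ A ↔ ∃ k ∈ K, ∃ a ∈ A, g = k * a := by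
    intro A g
    rw [← SetLike.mem_coe, Subgroup.normal_mul]
    simp [Set.mem_mul, eq_comm]
  have centsup : ∀ A : Subgroup G,
      Subgroup.centralizer ((K ⊔ A : Subgroup G) : Set G) = Subgroup.centralizer A := by
    intro A
    apply le_antisymm
    · exact Subgroup.centralizer_le (SetLike.coe_subset_coe.mpr le_sup_right)
    · intro g hg
      rw [Subgroup.mem_centralizer_iff] at hg ⊢
      intro m hm
      rw [SetLike.mem_coe, ← SetLike.mem_coe, Subgroup.normal_mul] at hm
      obtain ⟨k, hk, a, ha, rfl⟩ := hm
      have hc := (Subgroup.mem_center_iff.mp (hK hk))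
      have := hg a ha
      show k * a * g = g * (k * a)
      rw [mul_assoc, this, ← mul_assoc, ← hc g, mul_assoc]
  have F1 : ∀ A : Subgroup G, A ≤ α.range → (K ⊔ A) ⊓ α.range = A := by
    intro A hA
    apply le_antisymm
    · rintro g ⟨hg1, hg2⟩
      obtain ⟨k, hk, a, ha, rfl⟩ := (memsup A _).mp hg1
      have hkR : k ∈ K ⊓ α.range := ⟨hk, by
        have : k = (k * a) * a⁻¹ := by group
        rw [this]; exact Subgroup.mul_mem _ hg2 (Subgroup.inv_mem _ (hA ha))⟩
      rw [hbot] at hkR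
      rw [Subgroup.mem_bot] at hkR
      simpa [hkR] using ha
    · exact le_inf le_sup_right hA
  have F2 : ∀ S : Subgroup G, K ≤ S → K ⊔ (S ⊓ α.range) = S := by
    intro S hKS
    apply le_antisymm
    · exact sup_le hKS inf_le_left
    · intro s hs
      have h1 : ((α ((s : G ⧸ K)) : G) : G ⧸ K) = (s : G ⧸ K) := hα _
      have hk : s * (α (QuotientGroup.mk' K s))⁻¹ ∈ K := by
        rw [← QuotientGroup.eq_one_iff]
        simp [QuotientGroup.mk'_apply, h1]
      refine (memsup _ s).mpr ⟨s * (α (QuotientGroup.mk' K s))⁻¹, hk,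
        α (QuotientGroup.mk' K s), Subgroup.mem_inf.mpr ⟨?_, ⟨_, rfl⟩⟩, by group⟩
      have : α (QuotientGroup.mk' K s) = (s * (α (QuotientGroup.mk' K s))⁻¹)⁻¹ * s := by group
      rw [this]
      exact Subgroup.mul_mem _ (Subgroup.inv_mem _ (hKS hk)) hs
  have hKcent : ∀ S : Set G, K ≤ Subgroup.centralizer S :=
    fun S => le_trans hK (Subgroup.center_le_centralizer S)
  constructor
  · intro g
    have h1 : ((α ((g : G ⧸ K) : G ⧸ K) : G) : G ⧸ K) = (g : G ⧸ K) := hα _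
    refine ⟨g * (α (QuotientGroup.mk' K g))⁻¹, ?_, α (QuotientGroup.mk' K g), ⟨_, rfl⟩, by group⟩
    rw [← QuotientGroup.eq_one_iff]
    simp [QuotientGroup.mk'_apply, h1]
  · refine ⟨⟨fun p => ⟨(K ⊔ p.1.1, K ⊔ p.1.2), ?_, ?_⟩,
        fun q => ⟨(q.1.1 ⊓ α.range, q.1.2 ⊓ α.range), inf_le_right, inf_le_right, ?_, ?_⟩,
        ?_, ?_⟩, fun p => rfl, fun q => rfl⟩
    · obtain ⟨⟨A, B⟩, h1, h2, h3, h4⟩ := p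
      dsimp only at h1 h2 h3 h4 ⊢
      show Subgroup.centralizer ((K ⊔ A : Subgroup G) : Set G) = K ⊔ B
      rw [centsup, ← h3]
      exact (F2 _ (hKcent _)).symm
    · obtain ⟨⟨A, B⟩, h1, h2, h3, h4⟩ := p
      dsimp only at h1 h2 h3 h4 ⊢
      show Subgroup.centralizer ((K ⊔ B : Subgroup G) : Set G) = K ⊔ A
      rw [centsup, ← h4]
      exact (F2 _ (hKcent _)).symm
    · obtain ⟨⟨C, D⟩, h1, h2⟩ := q
      dsimp only at h1 h2 ⊢
      show Subgroup.centralizer ((C ⊓ α.range : Subgroup G) : Set G) ⊓ α.range = D ⊓ α.range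
      have hKC : K ≤ C := h2 ▸ hKcent _
      have hcd : Subgroup.centralizer ((C ⊓ α.range : Subgroup G) : Set G) = D := by
        rw [← centsup (C ⊓ α.range), F2 C hKC]; exact h1
      rw [hcd]
    · obtain ⟨⟨C, D⟩, h1, h2⟩ := q
      dsimp only at h1 h2 ⊢
      show Subgroup.centralizer ((D ⊓ α.range : Subgroup G) : Set G) ⊓ α.range = C ⊓ α.range
      have hKD : K ≤ D := h1 ▸ hKcent _
      have hdc : Subgroup.centralizer ((D ⊓ α.range : Subgroup G) : Set G) = C := by
        rw [← centsup (D ⊓ α.range), F2 D hKD]; exact h2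
      rw [hdc]
    · rintro ⟨⟨A, B⟩, h1, h2, h3, h4⟩
      dsimp only at h1 h2
      exact Subtype.ext (Prod.ext (F1 A h1) (F1 B h2))
    · rintro ⟨⟨C, D⟩, h1, h2⟩
      dsimp only at h1 h2
      exact Subtype.ext (Prod.ext (F2 C (h2 ▸ hKcent _)) (F2 D (h1 ▸ hKcent _)))
end
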